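/- Let n ≥ 1, let Γ be a finitely generated group and ρ : Γ → GL_n(ℝ) a linear representation, and equip G = ℝ^n ⋊_ρ Γ with the word length |·|_S associated to a compact symmetric generating set S containing the identity. If γ ∈ Γ and v ∈ ℝ^n with v ≠ 0 satisfy ρ(γ)·v = λ·v for some real number λ with |λ| > 1, then v is exponentially distorted in G: there exists C > 0 such that |(m·v, 1)|_S ≤ C·log m for all integers m ≥ 2. -/

import Mathlib

/-!
Statement 7: in `G = ℝ^n ⋊_ρ Γ` with word length given by a compact symmetric generating set
containing the identity, any nonzero eigenvector `v` of some `ρ(γ)` with real eigenvalue of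
modulus `> 1` is exponentially distorted.
-/

open Matrix Pointwise

noncomputable section

/-- The automorphism of `Multiplicative ℝ^n` given by a matrix in `GL_n(ℝ)`. -/
def glAut {n : ℕ} (A : GL (Fin n) ℝ) :
    MulAut (Multiplicative (Fin n → ℝ)) :=
  AddEquiv.toMultiplicative
    { toFun := fun v => (A : Matrix (Fin n) (Fin n) ℝ).mulVec v
      invFun := fun v => ((A⁻¹ : GL (Fin n) ℝ) : Matrix (Fin n) (Fin n) ℝ).mulVec v
      left_inv := fun v => by
        show ((A⁻¹ : GL (Fin n) ℝ) : Matrix (Fin n) (Fin n) ℝ).mulVec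
          ((A : Matrix (Fin n) (Fin n) ℝ).mulVec v) = v
        rw [Matrix.mulVec_mulVec, ← Units.val_mul, inv_mul_cancel, Units.val_one,
          Matrix.one_mulVec]
      right_inv := fun v => by
        show ((A : GL (Fin n) ℝ) : Matrix (Fin n) (Fin n) ℝ).mulVec
          (((A⁻¹ : GL (Fin n) ℝ) : Matrix (Fin n) (Fin n) ℝ).mulVec v) = v
        rw [Matrix.mulVec_mulVec, ← Units.val_mul, mul_inv_cancel, Units.val_one,
          Matrix.one_mulVec]
      map_add' := fun v w => by simp [Matrix.mulVec_add] }

/-- The action of `GL_n(ℝ)` on `Multiplicative ℝ^n`, as a homomorphism to the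
automorphism group. -/
def glHom {n : ℕ} : GL (Fin n) ℝ →* MulAut (Multiplicative (Fin n → ℝ)) where
  toFun := glAut
  map_one' := by
    apply DFunLike.ext
    intro v
    show ((1 : GL (Fin n) ℝ) : Matrix (Fin n) (Fin n) ℝ).mulVec v = v
    simp
    exact Matrix.one_mulVec _
  map_mul' := fun A B => by
    apply DFunLike.ext
    intro v
    show ((A * B : GL (Fin n) ℝ) : Matrix (Fin n) (Fin n) ℝ).mulVec v
      = (A : Matrix (Fin n) (Fin n) ℝ).mulVec ((B : Matrix (Fin n) (Fin n) ℝ).mulVec v)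
    simp [Matrix.mulVec_mulVec]
    exact (Matrix.mulVec_mulVec _ _ _).symm

/-- Product topology on a semidirect product. -/
instance semidirectTopology {N H : Type*} [Group N] [Group H] [TopologicalSpace N]
    [TopologicalSpace H] {φ : H →* MulAut N} : TopologicalSpace (N ⋊[φ] H) :=
  TopologicalSpace.induced (fun g => (g.left, g.right)) inferInstance

/-- Word length with respect to a generating set `S`. -/
def wordLength {G : Type*} [Group G] (S : Set G) (g : G) : ℕ :=
  sInf {m : ℕ | g ∈ S ^ m}

/-! ### Auxiliary lemmas -/

section WLLemmas

variable {G' : Type*} [Group G'] {S : Set G'}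

lemma wl_le {g : G'} {m : ℕ} (h : g ∈ S ^ m) : wordLength S g ≤ m := Nat.sInf_le h

lemma mem_pow_wl (hSgen : ∀ g : G', ∃ m : ℕ, g ∈ S ^ m) (g : G') :
    g ∈ S ^ (wordLength S g) := Nat.sInf_mem (hSgen g)

lemma wl_mul (hSgen : ∀ g : G', ∃ m : ℕ, g ∈ S ^ m) (g h : G') :
    wordLength S (g * h) ≤ wordLength S g + wordLength S h := by
  apply wl_le
  rw [pow_add]
  exact Set.mul_mem_mul (mem_pow_wl hSgen g) (mem_pow_wl hSgen h)

lemma wl_inv (hSsymm : S⁻¹ = S) (hSgen : ∀ g : G', ∃ m : ℕ, g ∈ S ^ m) (g : G') :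
    wordLength S g⁻¹ ≤ wordLength S g := by
  apply wl_le
  have h : g⁻¹ ∈ (S ^ wordLength S g)⁻¹ := Set.inv_mem_inv.2 (mem_pow_wl hSgen g)
  rwa [← inv_pow, hSsymm] at h

lemma wl_one : wordLength S (1 : G') = 0 := by
  have h : (1 : G') ∈ S ^ 0 := by rw [pow_zero]; exact Set.mem_one.2 rfl
  exact Nat.le_zero.1 (wl_le h)

lemma wl_pow (hSgen : ∀ g : G', ∃ m : ℕ, g ∈ S ^ m) (g : G') (k : ℕ) :
    wordLength S (g ^ k) ≤ k * wordLength S g := by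
  induction k with
  | zero => simp [pow_zero, wl_one]
  | succ k ih =>
      calc wordLength S (g ^ (k+1)) = wordLength S (g ^ k * g) := by rw [pow_succ]
        _ ≤ wordLength S (g ^ k) + wordLength S g := wl_mul hSgen _ _
        _ ≤ k * wordLength S g + wordLength S g := by omega
        _ = (k+1) * wordLength S g := by ring

end WLLemmas

lemma glHom_apply {n : ℕ} {Γ : Type*} [Group Γ] (ρ : Γ →* GL (Fin n) ℝ) (α : Γ)
    (x : Multiplicative (Fin n → ℝ)) :
    (glHom.comp ρ) α x
      = Multiplicative.ofAdd ((ρ α : Matrix (Fin n) (Fin n) ℝ).mulVec x.toAdd) := rfl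

lemma compact_image_pow {n : ℕ} {Γ : Type*} [Group Γ] [TopologicalSpace Γ]
    [DiscreteTopology Γ] (ρ : Γ →* GL (Fin n) ℝ)
    {S : Set (Multiplicative (Fin n → ℝ) ⋊[glHom.comp ρ] Γ)} (hS : IsCompact S) (m : ℕ) :
    IsCompact ((fun g : Multiplicative (Fin n → ℝ) ⋊[glHom.comp ρ] Γ =>
      (g.left, g.right)) '' (S ^ m)) := by
  set N := Multiplicative (Fin n → ℝ)
  set e : (N ⋊[glHom.comp ρ] Γ) → N × Γ := fun g => (g.left, g.right) with he
  have hecont : Continuous e := continuous_induced_dom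
  have hmul : Continuous (fun p : (N × Γ) × (N × Γ) =>
      ((p.1.1 * (glHom.comp ρ) p.1.2 p.2.1, p.1.2 * p.2.2) : N × Γ)) := by
    apply Continuous.prodMk
    · apply Continuous.mul continuous_fst.fst
      show Continuous fun p : (N × Γ) × (N × Γ) =>
        Multiplicative.ofAdd ((ρ p.1.2 : Matrix (Fin n) (Fin n) ℝ).mulVec p.2.1.toAdd)
      apply continuous_ofAdd.comp
      exact Continuous.matrix_mulVec
        ((continuous_of_discreteTopology
          (f := fun α : Γ => (ρ α : Matrix (Fin n) (Fin n) ℝ))).comp continuous_fst.snd)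
        (continuous_toAdd.comp continuous_snd.fst)
    · exact (continuous_of_discreteTopology (f := fun q : Γ × Γ => q.1 * q.2)).comp
        (continuous_fst.snd.prodMk continuous_snd.snd)
  induction m with
  | zero =>
      rw [pow_zero]
      have h1 : ((fun g : N ⋊[glHom.comp ρ] Γ => (g.left, g.right)) '' (1 : Set _))
          = {((1 : N), (1 : Γ))} := by
        rw [show (1 : Set (N ⋊[glHom.comp ρ] Γ)) = {1} from rfl, Set.image_singleton]
        rfl
      rw [h1]
      exact isCompact_singleton
  | succ k ih =>
      rw [pow_succ]
      have himg : e '' (S ^ k * S) = (fun p : (N × Γ) × (N × Γ) =>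
          ((p.1.1 * (glHom.comp ρ) p.1.2 p.2.1, p.1.2 * p.2.2) : N × Γ)) ''
            ((e '' (S ^ k)) ×ˢ (e '' S)) := by
        ext x
        constructor
        · rintro ⟨g, hg, rfl⟩
          rw [Set.mem_mul] at hg
          obtain ⟨a, ha, b, hb, rfl⟩ := hg
          exact ⟨(e a, e b), ⟨⟨a, ha, rfl⟩, ⟨b, hb, rfl⟩⟩, rfl⟩
        · rintro ⟨⟨p1, p2⟩, ⟨hp1, hp2⟩, rfl⟩
          obtain ⟨a, ha, rfl⟩ := hp1
          obtain ⟨b, hb, rfl⟩ := hp2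
          exact ⟨a * b, Set.mul_mem_mul ha hb, rfl⟩
      rw [himg]
      exact ((ih).prod (hS.image hecont)).image hmul

set_option maxHeartbeats 1000000 in
theorem statement7 (n : ℕ) (hn : 1 ≤ n) (Γ : Type*) [Group Γ] [TopologicalSpace Γ]
    [DiscreteTopology Γ] (hΓ : Group.FG Γ) (ρ : Γ →* GL (Fin n) ℝ)
    (S : Set (Multiplicative (Fin n → ℝ) ⋊[glHom.comp ρ] Γ))
    (hS1 : (1 : Multiplicative (Fin n → ℝ) ⋊[glHom.comp ρ] Γ) ∈ S)
    (hSsymm : S⁻¹ = S) (hScompact : IsCompact S)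
    (hSgen : ∀ g : Multiplicative (Fin n → ℝ) ⋊[glHom.comp ρ] Γ, ∃ m : ℕ, g ∈ S ^ m)
    (γ : Γ) (v : Fin n → ℝ) (hv : v ≠ 0) (lam : ℝ) (hlam : 1 < |lam|)
    (heig : (ρ γ : Matrix (Fin n) (Fin n) ℝ).mulVec v = lam • v) :
    ∃ C : ℝ, 0 < C ∧ ∀ m : ℕ, 2 ≤ m →
      (wordLength S (SemidirectProduct.inl (Multiplicative.ofAdd (m • v))) : ℝ) ≤
        C * Real.log m := by
  classical
  set μ : ℝ := lam ^ 2 with hμdef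
  have hμ : 1 < μ := by rw [hμdef, ← sq_abs]; exact one_lt_pow₀ hlam two_ne_zero
  have hμ0 : (0:ℝ) < μ := lt_trans one_pos hμ
  have heig2 : (ρ (γ * γ) : Matrix (Fin n) (Fin n) ℝ).mulVec v = μ • v := by
    rw [_root_.map_mul, Units.val_mul, ← Matrix.mulVec_mulVec, heig, Matrix.mulVec_smul, heig,
      smul_smul, hμdef, sq]
  have key : ∀ K : ℕ, ∀ t : ℝ, (ρ ((γ*γ)^K) : Matrix (Fin n) (Fin n) ℝ).mulVec (t • v)
      = (μ ^ K * t) • v := by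
    intro K
    induction K with
    | zero => intro t; simp
    | succ k ih =>
        intro t
        rw [pow_succ' (γ*γ) k, _root_.map_mul, Units.val_mul, ← Matrix.mulVec_mulVec, ih t,
          Matrix.mulVec_smul, heig2, smul_smul,
          show μ ^ k * t * μ = μ ^ (k+1) * t by ring]
  have conj : ∀ K : ℕ, ∀ t : ℝ,
      (SemidirectProduct.inr ((γ*γ)^K) : Multiplicative (Fin n → ℝ) ⋊[glHom.comp ρ] Γ)
        * SemidirectProduct.inl (Multiplicative.ofAdd (t • v))
        * (SemidirectProduct.inr ((γ*γ)^K) : Multiplicative (Fin n → ℝ) ⋊[glHom.comp ρ] Γ)⁻¹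
      = SemidirectProduct.inl (Multiplicative.ofAdd ((μ ^ K * t) • v)) := by
    intro K t
    rw [← _root_.map_inv, ← SemidirectProduct.inl_aut]
    congr 1
    rw [glHom_apply]
    rw [toAdd_ofAdd, key]
  set f : ℝ → ℕ :=
    fun t => wordLength S (SemidirectProduct.inl (Multiplicative.ofAdd (t • v)) : Multiplicative (Fin n → ℝ) ⋊[glHom.comp ρ] Γ)
    with hfdef
  have fadd : ∀ s t : ℝ, f (s + t) ≤ f s + f t := by
    intro s t
    have h : (SemidirectProduct.inl (Multiplicative.ofAdd ((s+t) • v)) : Multiplicative (Fin n → ℝ) ⋊[glHom.comp ρ] Γ)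
        = SemidirectProduct.inl (Multiplicative.ofAdd (s • v))
          * SemidirectProduct.inl (Multiplicative.ofAdd (t • v)) := by
      rw [← _root_.map_mul, ← ofAdd_add, add_smul]
    show wordLength S (SemidirectProduct.inl (Multiplicative.ofAdd ((s+t) • v)) : Multiplicative (Fin n → ℝ) ⋊[glHom.comp ρ] Γ) ≤ _
    rw [h]
    exact wl_mul hSgen _ _
  have fneg : ∀ t : ℝ, f (-t) ≤ f t := by
    intro t
    have h : (SemidirectProduct.inl (Multiplicative.ofAdd ((-t) • v)) : Multiplicative (Fin n → ℝ) ⋊[glHom.comp ρ] Γ)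
        = (SemidirectProduct.inl (Multiplicative.ofAdd (t • v)) : Multiplicative (Fin n → ℝ) ⋊[glHom.comp ρ] Γ)⁻¹ := by
      rw [← _root_.map_inv, ← ofAdd_neg, neg_smul]
    show wordLength S (SemidirectProduct.inl (Multiplicative.ofAdd ((-t) • v)) : Multiplicative (Fin n → ℝ) ⋊[glHom.comp ρ] Γ) ≤ _
    rw [h]
    exact wl_inv hSsymm hSgen _
  have fzero : f 0 = 0 := by
    show wordLength S (SemidirectProduct.inl (Multiplicative.ofAdd ((0:ℝ) • v)) : Multiplicative (Fin n → ℝ) ⋊[glHom.comp ρ] Γ) = 0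
    rw [zero_smul, ofAdd_zero, _root_.map_one]
    exact wl_one
  have fsmul : ∀ q : ℕ, ∀ t : ℝ, f ((q:ℝ) * t) ≤ q * f t := by
    intro q
    induction q with
    | zero => intro t; simp only [Nat.cast_zero, zero_mul, fzero]; omega
    | succ k ih =>
        intro t
        have h : ((k+1 : ℕ) : ℝ) * t = (k:ℕ) * t + t := by push_cast; ring
        calc f ((k+1 : ℕ) * t) = f ((k:ℕ) * t + t) := by rw [h]
          _ ≤ f ((k:ℕ) * t) + f t := fadd _ _
          _ ≤ k * f t + f t := by have := ih t; omega
          _ = (k+1) * f t := by ring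
  -- closedness of sublevel sets and Baire
  set e : Multiplicative (Fin n → ℝ) ⋊[glHom.comp ρ] Γ → Multiplicative (Fin n → ℝ) × Γ := fun g => (g.left, g.right) with hedef
  set A : ℕ → Set ℝ :=
    fun m => {t : ℝ | (SemidirectProduct.inl (Multiplicative.ofAdd (t • v)) : Multiplicative (Fin n → ℝ) ⋊[glHom.comp ρ] Γ) ∈ S ^ m}
    with hAdef
  have hψ : Continuous (fun t : ℝ =>
      ((Multiplicative.ofAdd (t • v), 1) : Multiplicative (Fin n → ℝ) × Γ)) :=
    (continuous_ofAdd.comp (continuous_id.smul continuous_const)).prodMk continuous_const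
  have hAclosed : ∀ m, IsClosed (A m) := by
    intro m
    have hcomp := compact_image_pow ρ hScompact m
    have hAeq : A m = (fun t : ℝ =>
        ((Multiplicative.ofAdd (t • v), 1) : Multiplicative (Fin n → ℝ) × Γ)) ⁻¹'
          (e '' (S ^ m)) := by
      ext t
      simp only [hAdef, Set.mem_setOf_eq, Set.mem_preimage]
      constructor
      · intro h
        exact ⟨_, h, rfl⟩
      · rintro ⟨g, hg, hge⟩
        have h1 : g.left = Multiplicative.ofAdd (t • v) := congrArg Prod.fst hge
        have h2 : g.right = 1 := congrArg Prod.snd hge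
        have hgeq : g = (SemidirectProduct.inl (Multiplicative.ofAdd (t • v)) : Multiplicative (Fin n → ℝ) ⋊[glHom.comp ρ] Γ) := by
          ext
          · rw [h1, SemidirectProduct.left_inl]
          · rw [h2, SemidirectProduct.right_inl]
        rwa [← hgeq]
    rw [hAeq]
    exact (hcomp.isClosed).preimage hψ
  have hcover : ⋃ m, A m = Set.univ := by
    ext t
    simp only [Set.mem_iUnion, Set.mem_univ, iff_true]
    exact hSgen _
  obtain ⟨m₀, ht₀'⟩ := nonempty_interior_of_iUnion_of_closed hAclosed hcover
  obtain ⟨t₀, ht₀⟩ := ht₀'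
  rw [mem_interior_iff_mem_nhds, Metric.mem_nhds_iff] at ht₀
  obtain ⟨ε, hε, hball⟩ := ht₀
  have hsmall : ∀ h : ℝ, |h| < ε → f h ≤ m₀ + f t₀ := by
    intro h hh
    have h1 : f (t₀ + h) ≤ m₀ := by
      have hmem : t₀ + h ∈ A m₀ := by
        apply hball
        show dist (t₀ + h) t₀ < ε
        rw [Real.dist_eq, add_sub_cancel_left]
        exact hh
      exact wl_le hmem
    have heq : t₀ + h + -t₀ = h := by ring
    calc f h = f (t₀ + h + -t₀) := by rw [heq]
      _ ≤ f (t₀ + h) + f (-t₀) := fadd _ _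
      _ ≤ m₀ + f t₀ := add_le_add h1 (fneg t₀)
  obtain ⟨q, hq⟩ := exists_nat_gt (μ / ε)
  have hq0 : 0 < (q:ℝ) := lt_of_le_of_lt (div_nonneg hμ0.le hε.le) hq
  set M : ℕ := q * (m₀ + f t₀) with hMdef
  have hIcc : ∀ t : ℝ, 0 ≤ t → t ≤ μ → f t ≤ M := by
    intro t ht0 htμ
    have hqε : μ / q < ε := by
      rw [div_lt_iff₀ hq0]
      calc μ < ε * q := by
            have := (div_lt_iff₀ hε).1 hq
            linarith [this]
        _ = ε * q := rfl
    have hdiv : |t / q| < ε := by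
      rw [abs_of_nonneg (div_nonneg ht0 hq0.le)]
      calc t / q ≤ μ / q := by gcongr
        _ < ε := hqε
    have hqt : (q:ℝ) * (t / q) = t := by
      rw [mul_comm, div_mul_cancel₀ _ (ne_of_gt hq0)]
    calc f t = f ((q:ℝ) * (t/q)) := by rw [hqt]
      _ ≤ q * f (t/q) := fsmul q _
      _ ≤ q * (m₀ + f t₀) := Nat.mul_le_mul_left q (hsmall _ hdiv)
  set W : ℕ := wordLength S (SemidirectProduct.inr (γ * γ) : Multiplicative (Fin n → ℝ) ⋊[glHom.comp ρ] Γ) with hWdef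
  have hlogμ : 0 < Real.log μ := Real.log_pos hμ
  have hlog2 : 0 < Real.log 2 := Real.log_pos one_lt_two
  refine ⟨2*(W:ℝ) / Real.log μ + (M:ℝ) / Real.log 2 + 1, ?_, ?_⟩
  · have h1 : 0 ≤ 2*(W:ℝ) / Real.log μ := by positivity
    have h2 : 0 ≤ (M:ℝ) / Real.log 2 := by positivity
    linarith
  · intro m hm
    have hm2 : (2:ℝ) ≤ (m:ℝ) := by exact_mod_cast hm
    have hm1 : (1:ℝ) ≤ (m:ℝ) := by linarith
    have hm0 : (0:ℝ) < (m:ℝ) := by linarith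
    have hmgt1 : (1:ℝ) < (m:ℝ) := by linarith
    set K : ℕ := ⌊Real.logb μ m⌋₊ with hKdef
    have hlogbK : (K:ℝ) ≤ Real.logb μ m := Nat.floor_le (Real.logb_nonneg hμ hm1)
    have hpow_le : μ ^ K ≤ (m:ℝ) := by
      have h := (Real.rpow_le_rpow_left_iff hμ).2 hlogbK
      rwa [Real.rpow_natCast, Real.rpow_logb hμ0 (ne_of_gt hμ) hm0] at h
    have hlt : (m:ℝ) < μ ^ (K+1) := by
      have h1 : Real.logb μ m < (K:ℝ) + 1 := Nat.lt_floor_add_one _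
      have h := (Real.rpow_lt_rpow_left_iff hμ).2 h1
      rwa [Real.rpow_logb hμ0 (ne_of_gt hμ) hm0,
        show ((K:ℝ) + 1) = (((K+1 : ℕ)):ℝ) by push_cast; ring,
        Real.rpow_natCast] at h
    set t : ℝ := (m:ℝ) / μ ^ K with htdef
    have hμK0 : (0:ℝ) < μ ^ K := pow_pos hμ0 K
    have ht0 : 0 ≤ t := div_nonneg hm0.le hμK0.le
    have htμ : t ≤ μ := by
      rw [htdef, div_le_iff₀ hμK0]
      calc (m:ℝ) ≤ μ^(K+1) := hlt.le
        _ = μ * μ^K := by ring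
    have htm : μ ^ K * t = (m:ℝ) := by
      rw [htdef, mul_comm, div_mul_cancel₀ _ (ne_of_gt hμK0)]
    have hid : (SemidirectProduct.inl (Multiplicative.ofAdd (m • v)) : Multiplicative (Fin n → ℝ) ⋊[glHom.comp ρ] Γ)
        = SemidirectProduct.inr ((γ*γ)^K)
          * SemidirectProduct.inl (Multiplicative.ofAdd (t • v))
          * (SemidirectProduct.inr ((γ*γ)^K) : Multiplicative (Fin n → ℝ) ⋊[glHom.comp ρ] Γ)⁻¹ := by
      rw [conj K t, htm, Nat.cast_smul_eq_nsmul]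
    have hgK : wordLength S (SemidirectProduct.inr ((γ*γ)^K) : Multiplicative (Fin n → ℝ) ⋊[glHom.comp ρ] Γ) ≤ K * W := by
      rw [_root_.map_pow]
      exact wl_pow hSgen _ K
    have hbound : wordLength S (SemidirectProduct.inl (Multiplicative.ofAdd (m • v)) : Multiplicative (Fin n → ℝ) ⋊[glHom.comp ρ] Γ)
        ≤ K * W + M + K * W := by
      rw [hid]
      have hb1 := wl_mul hSgen
        ((SemidirectProduct.inr ((γ*γ)^K) : Multiplicative (Fin n → ℝ) ⋊[glHom.comp ρ] Γ)
          * SemidirectProduct.inl (Multiplicative.ofAdd (t • v)))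
        ((SemidirectProduct.inr ((γ*γ)^K) : Multiplicative (Fin n → ℝ) ⋊[glHom.comp ρ] Γ)⁻¹)
      have hb2 := wl_mul hSgen (SemidirectProduct.inr ((γ*γ)^K) : Multiplicative (Fin n → ℝ) ⋊[glHom.comp ρ] Γ)
        (SemidirectProduct.inl (Multiplicative.ofAdd (t • v)))
      have hb3 : wordLength S ((SemidirectProduct.inr ((γ*γ)^K) : Multiplicative (Fin n → ℝ) ⋊[glHom.comp ρ] Γ)⁻¹) ≤ K * W :=
        le_trans (wl_inv hSsymm hSgen _) hgK
      have hb4 : f t ≤ M := hIcc t ht0 htμ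
      have hb5 : wordLength S (SemidirectProduct.inl (Multiplicative.ofAdd (t • v)) : Multiplicative (Fin n → ℝ) ⋊[glHom.comp ρ] Γ) ≤ M :=
        hb4
      omega
    have h3 : (wordLength S (SemidirectProduct.inl (Multiplicative.ofAdd (m • v)) : Multiplicative (Fin n → ℝ) ⋊[glHom.comp ρ] Γ) : ℝ)
        ≤ 2*(W:ℝ)*(K:ℝ) + (M:ℝ) := by
      have := hbound
      have hcast : (wordLength S (SemidirectProduct.inl (Multiplicative.ofAdd (m • v)) : Multiplicative (Fin n → ℝ) ⋊[glHom.comp ρ] Γ) : ℝ)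
          ≤ ((K * W + M + K * W : ℕ) : ℝ) := by exact_mod_cast this
      push_cast at hcast
      linarith
    have hlogm : 0 < Real.log m := Real.log_pos hmgt1
    have hKle : (K:ℝ) ≤ Real.log m / Real.log μ := by
      rwa [← Real.log_div_log] at hlogbK
    have h4 : 2*(W:ℝ)*(K:ℝ) ≤ (2*(W:ℝ)/Real.log μ) * Real.log m := by
      calc 2*(W:ℝ)*(K:ℝ) ≤ 2*(W:ℝ)*(Real.log m / Real.log μ) := by
            apply mul_le_mul_of_nonneg_left hKle
            positivity
        _ = (2*(W:ℝ)/Real.log μ) * Real.log m := by ring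
    have h5 : (M:ℝ) ≤ ((M:ℝ)/Real.log 2) * Real.log m := by
      have hle : Real.log 2 ≤ Real.log m := Real.log_le_log (by norm_num) hm2
      have h1 : (1:ℝ) ≤ Real.log m / Real.log 2 := (one_le_div hlog2).2 hle
      calc (M:ℝ) = (M:ℝ) * 1 := by ring
        _ ≤ (M:ℝ) * (Real.log m / Real.log 2) := by
            apply mul_le_mul_of_nonneg_left h1
            positivity
        _ = ((M:ℝ)/Real.log 2) * Real.log m := by ring
    calc (wordLength S (SemidirectProduct.inl (Multiplicative.ofAdd (m • v)) : Multiplicative (Fin n → ℝ) ⋊[glHom.comp ρ] Γ) : ℝ)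
        ≤ 2*(W:ℝ)*(K:ℝ) + (M:ℝ) := h3
      _ ≤ (2*(W:ℝ)/Real.log μ)*Real.log m + ((M:ℝ)/Real.log 2)*Real.log m :=
          add_le_add h4 h5
      _ = (2*(W:ℝ)/Real.log μ + (M:ℝ)/Real.log 2)*Real.log m := by ring
      _ ≤ (2*(W:ℝ)/Real.log μ + (M:ℝ)/Real.log 2 + 1)*Real.log m := by
          apply mul_le_mul_of_nonneg_right _ hlogm.le
          linarith

end
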